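/- For every sequence (P_m)_{m≥1} with P_m = P⁰ for m odd and P_m ∈ {P⁰, P¹} for m even, there exists a sequence of points (p_m)_{m≥0} such that for every m ≥ 0: p_m lies in the open real interval (−1,0) and in the frontier of 𝒦_m, and P_{m+1}(p_m) = p_{m+1}. -/

import Mathlib

open Filter

/-- `P⁰(z) = z² − 1`. -/
def P0 : ℂ → ℂ := fun z => z ^ 2 - 1

/-- `P¹(z) = z³`. -/
def P1 : ℂ → ℂ := fun z => z ^ 3

/-- `Qcomp P m n z` is the value at `z` of the composition
`Q_{m,n} = P_n ∘ ⋯ ∘ P_{m+1}` (with `Q_{m,m} = id`). -/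
def Qcomp (P : ℕ → ℂ → ℂ) (m n : ℕ) (z : ℂ) : ℂ :=
  (List.range (n - m)).foldl (fun w k => P (m + k + 1) w) z

/-- Sequences with `P_m = P⁰` for odd `m` and `P_m ∈ {P⁰, P¹}` for even `m`. -/
def IsAdmissibleSeq (P : ℕ → ℂ → ℂ) : Prop :=
  ∀ m, 1 ≤ m → (Odd m → P m = P0) ∧ (Even m → P m = P0 ∨ P m = P1)

/-- The `m`-th iterated filled Julia set. -/
def filledJulia (P : ℕ → ℂ → ℂ) (m : ℕ) : Set ℂ :=
  {z | ∃ C : ℝ, ∀ n, m ≤ n → ‖Qcomp P m n z‖ ≤ C}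

-- AUX START
open Set Metric

lemma P0_ne_P1 : P0 ≠ P1 := by
  intro h
  have := congrFun h 0
  simp [P0, P1] at this

section Aux
variable (P : ℕ → ℂ → ℂ)

lemma P_cases (hP : IsAdmissibleSeq P) (j : ℕ) (hj : 1 ≤ j) : P j = P0 ∨ P j = P1 := by
  rcases Nat.even_or_odd j with he | ho
  · exact (hP j hj).2 he
  · exact Or.inl ((hP j hj).1 ho)

open Classical in
noncomputable def rstep (j : ℕ) (y : ℝ) : ℝ :=
  if P j = P0 then y ^ 2 - 1 else y ^ 3

open Classical in
noncomputable def pd (j : ℕ) (y : ℝ) : ℝ :=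
  if P j = P0 then 2 * y else 3 * y ^ 2

noncomputable def orb (x : ℝ) : ℕ → ℝ
  | 0 => x
  | n + 1 => rstep P (n + 1) (orb x n)

lemma continuous_rstep (j : ℕ) : Continuous (fun y : ℝ => rstep P j y) := by
  unfold rstep
  by_cases h : P j = P0
  · simp only [if_pos h]; fun_prop
  · simp only [if_neg h]; fun_prop

lemma continuous_orb (n : ℕ) : Continuous (fun x : ℝ => orb P x n) := by
  induction n with
  | zero => exact continuous_id
  | succ n ih => exact (continuous_rstep P (n + 1)).comp ih

lemma rstep_cast {j : ℕ} (h : P j = P0 ∨ P j = P1) (y : ℝ) :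
    P j (y : ℂ) = ((rstep P j y : ℝ) : ℂ) := by
  rcases h with h0 | h1
  · rw [h0]; rw [rstep, if_pos h0]; simp only [P0]; push_cast; ring
  · have hne : P j ≠ P0 := by rw [h1]; exact (Ne.symm P0_ne_P1)
    rw [h1]; rw [rstep, if_neg hne]; simp only [P1]; push_cast; ring

lemma hasDerivAt_P {j : ℕ} (h : P j = P0 ∨ P j = P1) (y : ℝ) :
    HasDerivAt (P j) ((pd P j y : ℝ) : ℂ) ((y : ℝ) : ℂ) := by
  rcases h with h0 | h1
  · rw [h0]
    have : HasDerivAt (fun z : ℂ => z ^ 2 - 1) (2 * (y : ℂ)) (y : ℂ) := by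
      simpa using (hasDerivAt_pow 2 ((y : ℝ) : ℂ)).sub_const 1
    have he : ((pd P j y : ℝ) : ℂ) = 2 * (y : ℂ) := by
      rw [pd, if_pos h0]; push_cast; ring
    rw [he]; exact this
  · have hne : P j ≠ P0 := by rw [h1]; exact (Ne.symm P0_ne_P1)
    rw [h1]
    have : HasDerivAt (fun z : ℂ => z ^ 3) (3 * (y : ℂ) ^ 2) (y : ℂ) := by
      simpa using hasDerivAt_pow 3 ((y : ℝ) : ℂ)
    have he : ((pd P j y : ℝ) : ℂ) = 3 * (y : ℂ) ^ 2 := by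
      rw [pd, if_neg hne]; push_cast; ring
    rw [he]; exact this

lemma Qcomp_self (m : ℕ) (z : ℂ) : Qcomp P m m z = z := by simp [Qcomp]

lemma Qcomp_succ {m n : ℕ} (h : m ≤ n) (z : ℂ) :
    Qcomp P m (n + 1) z = P (n + 1) (Qcomp P m n z) := by
  unfold Qcomp
  have h1 : n + 1 - m = (n - m) + 1 := by omega
  rw [h1, List.range_succ, List.foldl_append, List.foldl_cons, List.foldl_nil]
  have h2 : m + (n - m) + 1 = n + 1 := by omega
  rw [h2]

lemma orb_Qcomp (hP : IsAdmissibleSeq P) (x : ℝ) {m n : ℕ} (h : m ≤ n) :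
    Qcomp P m n ((orb P x m : ℝ) : ℂ) = ((orb P x n : ℝ) : ℂ) := by
  induction n, h using Nat.le_induction with
  | base => exact Qcomp_self P m _
  | succ n hmn ih =>
      rw [Qcomp_succ P hmn, ih, rstep_cast P (P_cases P hP (n + 1) (by omega))]
      rfl

end Aux

section Aux2
variable (P : ℕ → ℂ → ℂ)

lemma orb_odd_step (hP : IsAdmissibleSeq P) (x : ℝ) (k : ℕ) :
    orb P x (2 * k + 1) = (orb P x (2 * k)) ^ 2 - 1 := by
  have hodd : Odd (2 * k + 1) := ⟨k, by ring⟩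
  have h0 : P (2 * k + 1) = P0 := (hP _ (by omega)).1 hodd
  show rstep P (2 * k + 1) (orb P x (2 * k)) = _
  rw [rstep, if_pos h0]

lemma orb_odd_mem (hP : IsAdmissibleSeq P) (x : ℝ)
    (hx : ∀ k, orb P x (2 * k) ∈ Icc (-2/3 : ℝ) (-1/3)) (k : ℕ) :
    orb P x (2 * k + 1) ∈ Icc (-8/9 : ℝ) (-5/9) := by
  obtain ⟨h1, h2⟩ := hx k
  rw [orb_odd_step P hP x k]
  constructor <;> nlinarith

lemma orb_abs_le_one (hP : IsAdmissibleSeq P) (x : ℝ)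
    (hx : ∀ k, orb P x (2 * k) ∈ Icc (-2/3 : ℝ) (-1/3)) (n : ℕ) :
    |orb P x n| ≤ 1 := by
  rcases Nat.even_or_odd n with he | ho
  · obtain ⟨k, hk⟩ := he
    have : n = 2 * k := by omega
    subst this
    obtain ⟨h1, h2⟩ := hx k
    rw [abs_le]; constructor <;> linarith
  · obtain ⟨k, hk⟩ := ho
    subst hk
    obtain ⟨h1, h2⟩ := orb_odd_mem P hP x hx k
    rw [abs_le]; constructor <;> linarith

noncomputable def dprod (x : ℝ) (m n : ℕ) : ℝ :=
  ∏ k ∈ Finset.Ico m n, pd P (k + 1) (orb P x k)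

lemma dprod_self (x : ℝ) (m : ℕ) : dprod P x m m = 1 := by
  simp [dprod]

lemma dprod_succ (x : ℝ) {m n : ℕ} (h : m ≤ n) :
    dprod P x m (n + 1) = dprod P x m n * pd P (n + 1) (orb P x n) := by
  exact Finset.prod_Ico_succ_top h _

lemma hasDerivAt_Qcomp (hP : IsAdmissibleSeq P) (x : ℝ) {m n : ℕ} (h : m ≤ n) :
    HasDerivAt (Qcomp P m n) ((dprod P x m n : ℝ) : ℂ) ((orb P x m : ℝ) : ℂ) := by
  induction n, h using Nat.le_induction with
  | base =>
      have he : Qcomp P m m = fun z => z := funext fun z => Qcomp_self P m z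
      rw [he, dprod_self]
      simpa using hasDerivAt_id' ((orb P x m : ℝ) : ℂ)
  | succ n hmn ih =>
      have he : Qcomp P m (n + 1) = fun z => P (n + 1) (Qcomp P m n z) :=
        funext fun z => Qcomp_succ P hmn z
      rw [he, dprod_succ P x hmn]
      have hp := hasDerivAt_P P (P_cases P hP (n + 1) (by omega)) (orb P x n)
      rw [← orb_Qcomp P hP x hmn] at hp
      have := HasDerivAt.comp _ hp ih
      have hcast : ((dprod P x m n * pd P (n + 1) (orb P x n) : ℝ) : ℂ)
          = ((pd P (n + 1) (orb P x n) : ℝ) : ℂ) * ((dprod P x m n : ℝ) : ℂ) := by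
        push_cast; ring
      rw [hcast]
      exact this

lemma differentiable_Qcomp (hP : IsAdmissibleSeq P) {m n : ℕ} (h : m ≤ n) :
    Differentiable ℂ (Qcomp P m n) := by
  induction n, h using Nat.le_induction with
  | base =>
      have he : Qcomp P m m = fun z => z := funext fun z => Qcomp_self P m z
      rw [he]; exact differentiable_id
  | succ n hmn ih =>
      have he : Qcomp P m (n + 1) = fun z => P (n + 1) (Qcomp P m n z) :=
        funext fun z => Qcomp_succ P hmn z
      rw [he]
      rcases P_cases P hP (n + 1) (by omega) with h0 | h1
      · rw [h0]; unfold P0; exact (ih.pow 2).sub_const 1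
      · rw [h1]; unfold P1; exact ih.pow 3

end Aux2

section Aux3
variable (P : ℕ → ℂ → ℂ)

lemma block_ge (hP : IsAdmissibleSeq P) (x : ℝ)
    (hx : ∀ k, orb P x (2 * k) ∈ Icc (-2/3 : ℝ) (-1/3)) (k : ℕ) :
    (32/27 : ℝ) ≤ |pd P (2*k+1+1) (orb P x (2*k+1)) * pd P (2*k+1) (orb P x (2*k))| := by
  set t := orb P x (2 * k) with ht
  obtain ⟨ht1, ht2⟩ := hx k
  have ho : orb P x (2 * k + 1) = t ^ 2 - 1 := orb_odd_step P hP x k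
  have h1 : P (2 * k + 1) = P0 := (hP _ (by omega)).1 ⟨k, by ring⟩
  have hpd1 : pd P (2 * k + 1) t = 2 * t := by rw [pd, if_pos h1]
  have ht2' : 0 ≤ 8 + 3 * t - 9 * t ^ 2 := by nlinarith
  rcases P_cases P hP (2 * k + 1 + 1) (by omega) with h2 | h2
  · have hpd2 : pd P (2*k+1+1) (t ^ 2 - 1) = 2 * (t ^ 2 - 1) := by rw [pd, if_pos h2]
    rw [ho, hpd1, hpd2]
    have hpos : (32/27 : ℝ) ≤ 2 * (t ^ 2 - 1) * (2 * t) := by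
      nlinarith [mul_nonneg (by linarith : (0:ℝ) ≤ -(3*t+1)) ht2']
    exact hpos.trans (le_abs_self _)
  · have hne : P (2*k+1+1) ≠ P0 := by rw [h2]; exact (Ne.symm P0_ne_P1)
    have hpd2 : pd P (2*k+1+1) (t ^ 2 - 1) = 3 * (t ^ 2 - 1) ^ 2 := by rw [pd, if_neg hne]
    rw [ho, hpd1, hpd2]
    have hneg : 3 * (t ^ 2 - 1) ^ 2 * (2 * t) ≤ -(32/27 : ℝ) := by
      nlinarith [sq_nonneg (t + 2/3), sq_nonneg (t + 1/3), sq_nonneg (t^2 - 1),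
        mul_nonneg (by linarith : (0:ℝ) ≤ t + 2/3) (by linarith : (0:ℝ) ≤ -1/3 - t),
        sq_nonneg t]
    calc (32/27 : ℝ) ≤ -(3 * (t ^ 2 - 1) ^ 2 * (2 * t)) := by linarith
    _ ≤ |3 * (t ^ 2 - 1) ^ 2 * (2 * t)| := neg_le_abs _

lemma single_ge (hP : IsAdmissibleSeq P) (x : ℝ)
    (hx : ∀ k, orb P x (2 * k) ∈ Icc (-2/3 : ℝ) (-1/3)) (k : ℕ) :
    (25/27 : ℝ) ≤ |pd P (2*k+1+1) (orb P x (2*k+1))| := by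
  obtain ⟨h1, h2⟩ := orb_odd_mem P hP x hx k
  set y := orb P x (2 * k + 1)
  rcases P_cases P hP (2 * k + 1 + 1) (by omega) with h0 | hh1
  · rw [pd, if_pos h0]
    calc (25/27 : ℝ) ≤ -(2 * y) := by linarith
    _ ≤ |2 * y| := neg_le_abs _
  · have hne : P (2*k+1+1) ≠ P0 := by rw [hh1]; exact (Ne.symm P0_ne_P1)
    rw [pd, if_neg hne]
    calc (25/27 : ℝ) ≤ 3 * y ^ 2 := by nlinarith
    _ ≤ |3 * y ^ 2| := le_abs_self _

lemma dprod_even_ge (hP : IsAdmissibleSeq P) (x : ℝ)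
    (hx : ∀ k, orb P x (2 * k) ∈ Icc (-2/3 : ℝ) (-1/3)) (i : ℕ) :
    ∀ j, (32/27 : ℝ) ^ j ≤ |dprod P x (2*i) (2*i + 2*j)| := by
  intro j
  induction j with
  | zero => simp [dprod_self]
  | succ j ih =>
      have h1 : 2*i ≤ 2*i + 2*j := by omega
      have h2 : 2*i ≤ 2*i + 2*j + 1 := by omega
      have he1 : 2*i + 2*(j+1) = (2*i + 2*j + 1) + 1 := by ring
      have he2 : 2*i + 2*j = 2*(i+j) := by ring
      rw [he1, dprod_succ P x h2, dprod_succ P x h1, mul_assoc, abs_mul]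
      have hblock := block_ge P hP x hx (i + j)
      rw [← he2] at hblock
      have : |pd P (2*i+2*j+1) (orb P x (2*i+2*j)) * pd P (2*i+2*j+1+1) (orb P x (2*i+2*j+1))|
          = |pd P (2*i+2*j+1+1) (orb P x (2*i+2*j+1)) * pd P (2*i+2*j+1) (orb P x (2*i+2*j))| := by
        rw [mul_comm]
      calc (32/27 : ℝ) ^ (j+1) = (32/27 : ℝ) ^ j * (32/27) := by ring
      _ ≤ |dprod P x (2*i) (2*i+2*j)|
          * |pd P (2*i+2*j+1) (orb P x (2*i+2*j)) * pd P (2*i+2*j+1+1) (orb P x (2*i+2*j+1))| := by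
        rw [this]
        exact mul_le_mul ih hblock (by norm_num) (abs_nonneg _)

end Aux3

section Aux4
variable (P : ℕ → ℂ → ℂ)

lemma filledJulia_abs_le_two (hP : IsAdmissibleSeq P) {m : ℕ} {z : ℂ}
    (hz : z ∈ filledJulia P m) : ∀ n, m ≤ n → ‖Qcomp P m n z‖ ≤ 2 := by
  obtain ⟨C, hC⟩ := hz
  by_contra hcon
  push_neg at hcon
  obtain ⟨n, hn, h2⟩ := hcon
  have grow : ∀ j, 2 * (3/2 : ℝ) ^ j ≤ ‖Qcomp P m (n + j) z‖ := by
    intro j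
    induction j with
    | zero => simpa using h2.le
    | succ j ih =>
        set w := Qcomp P m (n + j) z with hw
        have hw2 : 2 ≤ ‖w‖ := by
          have : (1:ℝ) ≤ (3/2 : ℝ) ^ j := one_le_pow₀ (by norm_num)
          linarith
        have hstep : Qcomp P m (n + (j+1)) z = P (n + j + 1) w := by
          have : n + (j + 1) = (n + j) + 1 := by ring
          rw [this]
          exact Qcomp_succ P (by omega) z
        rw [hstep]
        rcases P_cases P hP (n + j + 1) (by omega) with h0 | h1
        · rw [h0]
          show 2 * (3/2 : ℝ) ^ (j+1) ≤ ‖w ^ 2 - 1‖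
          have tri : ‖w ^ 2‖ ≤ ‖w ^ 2 - 1‖ + 1 := by
            calc ‖w ^ 2‖ = ‖(w ^ 2 - 1) + 1‖ := by ring_nf
            _ ≤ ‖w ^ 2 - 1‖ + ‖(1:ℂ)‖ := norm_add_le _ _
            _ = ‖w ^ 2 - 1‖ + 1 := by simp
          have hpow : ‖w ^ 2‖ = ‖w‖ ^ 2 := norm_pow _ _
          calc 2 * (3/2 : ℝ) ^ (j+1) = (3/2) * (2 * (3/2 : ℝ) ^ j) := by ring
          _ ≤ (3/2) * ‖w‖ := by nlinarith
          _ ≤ ‖w‖ ^ 2 - 1 := by nlinarith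
          _ ≤ ‖w ^ 2 - 1‖ := by rw [← hpow] at *; linarith
        · rw [h1]
          show 2 * (3/2 : ℝ) ^ (j+1) ≤ ‖w ^ 3‖
          have hpow : ‖w ^ 3‖ = ‖w‖ ^ 3 := norm_pow _ _
          calc 2 * (3/2 : ℝ) ^ (j+1) = (3/2) * (2 * (3/2 : ℝ) ^ j) := by ring
          _ ≤ (3/2) * ‖w‖ := by nlinarith
          _ ≤ ‖w‖ ^ 3 := by
            have h4 : (4:ℝ) ≤ ‖w‖ ^ 2 := by nlinarith
            nlinarith [mul_le_mul hw2 h4 (by norm_num) (by linarith : (0:ℝ) ≤ ‖w‖)]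
          _ = ‖w ^ 3‖ := hpow.symm
  obtain ⟨j, hj⟩ := pow_unbounded_of_one_lt (C / 2) (by norm_num : (1:ℝ) < 3/2)
  have hb := hC (n + j) (by omega)
  have hg := grow j
  nlinarith

end Aux4

section Aux5
variable (P : ℕ → ℂ → ℂ)

lemma surj_claim (hP : IsAdmissibleSeq P) :
    ∀ N : ℕ, ∀ y ∈ Icc (-2/3 : ℝ) (-1/3), ∃ x ∈ Icc (-2/3 : ℝ) (-1/3),
      orb P x (2 * N) = y ∧ ∀ k ≤ N, orb P x (2 * k) ∈ Icc (-2/3 : ℝ) (-1/3) := by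
  intro N
  induction N with
  | zero =>
      intro y hy
      refine ⟨y, hy, rfl, ?_⟩
      intro k hk
      interval_cases k
      exact hy
  | succ N ih =>
      intro y hy
      obtain ⟨hy1, hy2⟩ := hy
      -- find z ∈ Icc with the (2N+1, 2N+2) block sending z to y
      have hblock : ∃ z ∈ Icc (-2/3 : ℝ) (-1/3),
          rstep P (2*N+1+1) (rstep P (2*N+1) z) = y := by
        have h1 : P (2 * N + 1) = P0 := (hP _ (by omega)).1 ⟨N, by ring⟩
        have hr1 : ∀ z : ℝ, rstep P (2*N+1) z = z ^ 2 - 1 := fun z => by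
          rw [rstep, if_pos h1]
        rcases P_cases P hP (2*N+1+1) (by omega) with h2 | h2
        · have hr2 : ∀ z : ℝ, rstep P (2*N+1+1) z = z ^ 2 - 1 := fun z => by
            rw [rstep, if_pos h2]
          have hcont : ContinuousOn (fun z : ℝ => (z^2-1)^2 - 1) (Icc (-2/3) (-1/3)) := by
            fun_prop
          have hiv := intermediate_value_Icc (by norm_num : (-2/3 : ℝ) ≤ -1/3) hcont
          have hymem : y ∈ Icc (((-2/3:ℝ)^2-1)^2 - 1) (((-1/3:ℝ)^2-1)^2 - 1) := by
            constructor <;> · norm_num; linarith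
          obtain ⟨z, hz, hfz⟩ := hiv hymem
          exact ⟨z, hz, by rw [hr1, hr2]; exact hfz⟩
        · have hne : P (2*N+1+1) ≠ P0 := by rw [h2]; exact (Ne.symm P0_ne_P1)
          have hr2 : ∀ z : ℝ, rstep P (2*N+1+1) z = z ^ 3 := fun z => by
            rw [rstep, if_neg hne]
          have hcont : ContinuousOn (fun z : ℝ => (z^2-1)^3) (Icc (-2/3) (-1/3)) := by
            fun_prop
          have hiv := intermediate_value_Icc' (by norm_num : (-2/3 : ℝ) ≤ -1/3) hcont
          have hymem : y ∈ Icc (((-1/3:ℝ)^2-1)^3) (((-2/3:ℝ)^2-1)^3) := by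
            constructor <;> · norm_num; linarith
          obtain ⟨z, hz, hfz⟩ := hiv hymem
          exact ⟨z, hz, by rw [hr1, hr2]; exact hfz⟩
      obtain ⟨z, hz, hzy⟩ := hblock
      obtain ⟨x, hx, hxz, hxall⟩ := ih z hz
      refine ⟨x, hx, ?_, ?_⟩
      · have he : 2 * (N + 1) = (2 * N + 1) + 1 := by ring
        rw [he]
        show rstep P (2*N+1+1) (orb P x (2*N+1)) = y
        have : orb P x (2*N+1) = rstep P (2*N+1) (orb P x (2*N)) := rfl
        rw [this, hxz]
        exact hzy
      · intro k hk
        rcases Nat.lt_or_ge k (N + 1) with hlt | hge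
        · exact hxall k (by omega)
        · have : k = N + 1 := by omega
          subst this
          have he : 2 * (N + 1) = (2 * N + 1) + 1 := by ring
          rw [he]
          show rstep P (2*N+1+1) (orb P x (2*N+1)) ∈ _
          have h' : orb P x (2*N+1) = rstep P (2*N+1) (orb P x (2*N)) := rfl
          rw [h', hxz, hzy]
          exact ⟨hy1, hy2⟩

lemma exists_x0 (hP : IsAdmissibleSeq P) :
    ∃ x : ℝ, ∀ k, orb P x (2 * k) ∈ Icc (-2/3 : ℝ) (-1/3) := by
  set S : ℕ → Set ℝ := fun N => {x : ℝ | ∀ k ≤ N, orb P x (2 * k) ∈ Icc (-2/3 : ℝ) (-1/3)}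
    with hS
  have hclosed : ∀ N, IsClosed (S N) := by
    intro N
    have : S N = ⋂ (k : ℕ) (_ : k ≤ N), (fun x => orb P x (2 * k)) ⁻¹' (Icc (-2/3 : ℝ) (-1/3)) := by
      ext x; simp [hS]
    rw [this]
    exact isClosed_iInter fun k => isClosed_iInter fun _ =>
      isClosed_Icc.preimage (continuous_orb P (2 * k))
  have hsub : ∀ N, S N ⊆ Icc (-2/3 : ℝ) (-1/3) := by
    intro N x hx
    have := hx 0 (Nat.zero_le N)
    simpa [orb] using this
  have hne : ∀ N, (S N).Nonempty := by
    intro N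
    obtain ⟨x, hx, -, hall⟩ := surj_claim P hP N (-1/3) (by norm_num)
    exact ⟨x, hall⟩
  have hmono : ∀ N, S (N + 1) ⊆ S N := fun N x hx k hk => hx k (by omega)
  have hcompact : IsCompact (S 0) :=
    IsCompact.of_isClosed_subset isCompact_Icc (hclosed 0) (hsub 0)
  obtain ⟨x, hx⟩ := IsCompact.nonempty_iInter_of_sequence_nonempty_isCompact_isClosed
    S hmono hne hcompact hclosed
  refine ⟨x, fun k => ?_⟩
  have := Set.mem_iInter.mp hx k
  exact this k le_rfl

end Aux5

/-- For every admissible sequence there is an orbit `(p_m)` with each `p_m` in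
the open real interval `(−1,0)` and in the frontier of `𝒦_m` (i.e. in the
iterated Julia set `𝒥_m`). -/
theorem exists_real_orbit_on_julia
    (P : ℕ → ℂ → ℂ) (hP : IsAdmissibleSeq P) :
    ∃ p : ℕ → ℂ, ∀ m : ℕ,
      p m ∈ (fun x : ℝ => (x : ℂ)) '' Set.Ioo (-1 : ℝ) 0 ∧
      p m ∈ frontier (filledJulia P m) ∧
      P (m + 1) (p m) = p (m + 1) := by
  obtain ⟨x0, hx0⟩ := exists_x0 P hP
  refine ⟨fun m => ((orb P x0 m : ℝ) : ℂ), fun m => ?_⟩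
  have hmem : ∀ n, orb P x0 n ∈ Set.Ioo (-1 : ℝ) 0 := by
    intro n
    rcases Nat.even_or_odd n with he | ho
    · obtain ⟨k, hk⟩ := he
      have h2 : n = 2 * k := by omega
      subst h2
      obtain ⟨h1, h2⟩ := hx0 k
      constructor <;> linarith
    · obtain ⟨k, rfl⟩ := ho
      obtain ⟨h1, h2⟩ := orb_odd_mem P hP x0 hx0 k
      constructor <;> linarith
  have hK : ((orb P x0 m : ℝ) : ℂ) ∈ filledJulia P m := by
    refine ⟨1, fun n hn => ?_⟩
    rw [orb_Qcomp P hP x0 hn, Complex.norm_real, Real.norm_eq_abs]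
    exact orb_abs_le_one P hP x0 hx0 n
  have hnotint : ((orb P x0 m : ℝ) : ℂ) ∉ interior (filledJulia P m) := by
    intro hint
    rw [mem_interior_iff_mem_nhds, Metric.mem_nhds_iff] at hint
    obtain ⟨ε, hε, hball⟩ := hint
    have hbd : ∀ n, m ≤ n → |dprod P x0 m n| ≤ 6 / ε := by
      intro n hn
      have hd := hasDerivAt_Qcomp P hP x0 hn
      have hdiff : DifferentiableOn ℂ (Qcomp P m n) (Metric.ball ((orb P x0 m : ℝ) : ℂ) ε) :=
        (differentiable_Qcomp P hP hn).differentiableOn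
      have hmaps : Set.MapsTo (Qcomp P m n) (Metric.ball ((orb P x0 m : ℝ) : ℂ) ε)
          (Metric.ball (Qcomp P m n ((orb P x0 m : ℝ) : ℂ)) 6) := by
        intro z hz
        have hz2 := filledJulia_abs_le_two P hP (hball hz) n hn
        have hp1 : ‖Qcomp P m n ((orb P x0 m : ℝ) : ℂ)‖ ≤ 1 := by
          rw [orb_Qcomp P hP x0 hn, Complex.norm_real, Real.norm_eq_abs]
          exact orb_abs_le_one P hP x0 hx0 n
        rw [Metric.mem_ball]
        have htri : dist (Qcomp P m n z) (Qcomp P m n ((orb P x0 m : ℝ) : ℂ))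
            ≤ ‖Qcomp P m n z‖ + ‖Qcomp P m n ((orb P x0 m : ℝ) : ℂ)‖ :=
          dist_le_norm_add_norm _ _
        linarith
      have hS := Complex.norm_deriv_le_div_of_mapsTo_ball hdiff (hmaps.mono_right ball_subset_closedBall) hε
      rw [hd.deriv, Complex.norm_real, Real.norm_eq_abs] at hS
      exact hS
    obtain ⟨j, hj⟩ := pow_unbounded_of_one_lt ((6 / ε) * (27 / 25)) (by norm_num : (1:ℝ) < 32/27)
    have hε6 : (0:ℝ) < 6 / ε := by positivity
    rcases Nat.even_or_odd m with he | ho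
    · obtain ⟨i, hi⟩ := he
      have hm : m = 2 * i := by omega
      have hge := dprod_even_ge P hP x0 hx0 i j
      rw [← hm] at hge
      have hle := hbd (m + 2 * j) (by omega)
      nlinarith
    · obtain ⟨i, hi⟩ := ho
      subst hi
      have hsplit : dprod P x0 (2*i+1) (2*i+1+1 + 2*j)
          = pd P (2*i+1+1) (orb P x0 (2*i+1)) * dprod P x0 (2*i+1+1) (2*i+1+1+2*j) := by
        unfold dprod
        rw [
          ← Finset.prod_Ico_consecutive _ (by omega : 2*i+1 ≤ 2*i+1+1)
            (by omega : 2*i+1+1 ≤ 2*i+1+1+2*j)]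
        congr 1
        rw [Nat.Ico_succ_singleton, Finset.prod_singleton]
      have h1 := single_ge P hP x0 hx0 i
      have h2' := dprod_even_ge P hP x0 hx0 (i+1) j
      have he2 : 2 * (i + 1) = 2*i+1+1 := by ring
      rw [he2] at h2'
      have hle := hbd (2*i+1+1+2*j) (by omega)
      rw [hsplit, abs_mul] at hle
      have hmul : (25/27 : ℝ) * (32/27) ^ j
          ≤ |pd P (2*i+1+1) (orb P x0 (2*i+1))| * |dprod P x0 (2*i+1+1) (2*i+1+1+2*j)| :=
        mul_le_mul h1 h2' (by positivity) (abs_nonneg _)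
      nlinarith
  refine ⟨⟨orb P x0 m, hmem m, rfl⟩, ⟨subset_closure hK, hnotint⟩, ?_⟩
  rw [rstep_cast P (P_cases P hP (m + 1) (by omega))]
  rfl
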